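/- Let G be the graph on the 13 unit vectors obtained by normalizing (1,0,0), (0,1,0), (0,0,1), (0,1,1), (1,0,1), (1,1,0), (0,1,−1), (1,0,−1), (1,−1,0), (−1,1,1), (1,−1,1), (1,1,−1), (1,1,1), where two vectors are adjacent if and only if they are orthogonal. Then the chromatic number of G is exactly 4. -/

import Mathlib

/-- The 13 vectors of DeCorte's configuration. -/
def ksVecs : Fin 13 → Fin 3 → ℝ :=
  ![![1,0,0], ![0,1,0], ![0,0,1],
    ![0,1,1], ![1,0,1], ![1,1,0],
    ![0,1,-1], ![1,0,-1], ![1,-1,0],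
    ![-1,1,1], ![1,-1,1], ![1,1,-1],
    ![1,1,1]]

/-- The orthogonality graph on the 13 vectors. -/
def ksGraph : SimpleGraph (Fin 13) where
  Adj i j := i ≠ j ∧ ∑ k, ksVecs i k * ksVecs j k = 0
  symm := ⟨fun i j h => ⟨h.1.symm, by
    rw [← h.2]; exact Finset.sum_congr rfl fun k _ => mul_comm _ _⟩⟩
  loopless := ⟨fun i h => h.1 rfl⟩

/-- Integer version of the vectors. -/
def ksVecsZ : Fin 13 → Fin 3 → ℤ :=
  ![![1,0,0], ![0,1,0], ![0,0,1],
    ![0,1,1], ![1,0,1], ![1,1,0],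
    ![0,1,-1], ![1,0,-1], ![1,-1,0],
    ![-1,1,1], ![1,-1,1], ![1,1,-1],
    ![1,1,1]]

lemma ksVecs_cast : ∀ (i : Fin 13) (k : Fin 3), ksVecs i k = ((ksVecsZ i k : ℤ) : ℝ) := by
  simp only [Fin.forall_fin_succ, Fin.forall_fin_zero_pi, ksVecs, ksVecsZ,
    Matrix.cons_val_zero, Matrix.cons_val_succ]
  norm_num

/-- Decidable integer version of the graph. -/
def ksGraphZ : SimpleGraph (Fin 13) where
  Adj i j := i ≠ j ∧ ∑ k, ksVecsZ i k * ksVecsZ j k = 0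
  symm := ⟨fun i j h => ⟨h.1.symm, by
    rw [← h.2]; exact Finset.sum_congr rfl fun k _ => mul_comm _ _⟩⟩
  loopless := ⟨fun i h => h.1 rfl⟩

instance : DecidableRel ksGraphZ.Adj := fun i j => by
  unfold ksGraphZ; exact instDecidableAnd

lemma ksGraph_eq : ksGraph = ksGraphZ := by
  ext i j
  show (i ≠ j ∧ _) ↔ (i ≠ j ∧ _)
  have : (∑ k, ksVecs i k * ksVecs j k) = ((∑ k, ksVecsZ i k * ksVecsZ j k : ℤ) : ℝ) := by
    push_cast
    exact Finset.sum_congr rfl fun k _ => by rw [ksVecs_cast, ksVecs_cast]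
  rw [this]
  exact and_congr_right fun _ => by exact_mod_cast Iff.rfl

/-- An explicit 4-coloring. -/
def c4 : Fin 13 → Fin 4 := ![0,1,2,1,0,0,2,2,1,1,3,2,0]

lemma colorable4 : ksGraphZ.Colorable 4 :=
  ⟨SimpleGraph.Coloring.mk c4 (by decide)⟩

/-- Kernel search showing the constraint system of a normalized 3-coloring is
unsatisfiable. -/
lemma no3 : ∀ a : Fin 3, a ≠ 0 → ∀ b : Fin 3, b ≠ 1 → ∀ c : Fin 3, c ≠ 2 →
    ∀ d : Fin 3, d ≠ 0 → d ≠ a → ∀ e : Fin 3, e ≠ 1 → e ≠ b →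
    ∀ g : Fin 3, g ≠ 2 → g ≠ c → ∀ h : Fin 3, h ≠ b → h ≠ c → h ≠ d →
    ∀ i : Fin 3, i ≠ a → i ≠ c → i ≠ e → ∀ j : Fin 3, j ≠ a → j ≠ b → j ≠ g →
    ∀ k : Fin 3, k ≠ d → k ≠ e → k ≠ g → False := by decide

lemma not_colorable3 : ¬ ksGraphZ.Colorable 3 := by
  rintro ⟨C⟩
  have h01 : C 0 ≠ C 1 := C.valid (by decide)
  have h02 : C 0 ≠ C 2 := C.valid (by decide)
  have h12 : C 1 ≠ C 2 := C.valid (by decide)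
  set a := C 0; set b := C 1; set c := C 2
  let τ : Fin 3 → Fin 3 := fun x => if x = a then 0 else if x = b then 1 else 2
  have hτ : ∀ x y : Fin 3, x ≠ y → τ x ≠ τ y := by
    intro x y hxy
    have key : ∀ a b c x y : Fin 3, a ≠ b → a ≠ c → b ≠ c → x ≠ y →
        (if x = a then (0:Fin 3) else if x = b then 1 else 2) ≠
        (if y = a then (0:Fin 3) else if y = b then 1 else 2) := by decide
    exact key a b c x y h01 h02 h12 hxy
  let f : Fin 13 → Fin 3 := fun i => τ (C i)
  have hf : ∀ i j : Fin 13, ksGraphZ.Adj i j → f i ≠ f j :=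
    fun i j hij => hτ _ _ (C.valid hij)
  have hf0 : f 0 = 0 := by
    show (if a = a then (0:Fin 3) else if a = b then 1 else 2) = 0; simp
  have hf1 : f 1 = 1 := by
    show (if b = a then (0:Fin 3) else if b = b then 1 else 2) = 1; simp [h01.symm]
  have hf2 : f 2 = 2 := by
    show (if c = a then (0:Fin 3) else if c = b then 1 else 2) = 2; simp [h02.symm, h12.symm]
  exact no3 (f 3) (hf0 ▸ hf 3 0 (by decide))
    (f 4) (hf1 ▸ hf 4 1 (by decide))
    (f 5) (hf2 ▸ hf 5 2 (by decide))
    (f 6) (hf0 ▸ hf 6 0 (by decide)) (hf 6 3 (by decide))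
    (f 7) (hf1 ▸ hf 7 1 (by decide)) (hf 7 4 (by decide))
    (f 8) (hf2 ▸ hf 8 2 (by decide)) (hf 8 5 (by decide))
    (f 9) (hf 9 4 (by decide)) (hf 9 5 (by decide)) (hf 9 6 (by decide))
    (f 10) (hf 10 3 (by decide)) (hf 10 5 (by decide)) (hf 10 7 (by decide))
    (f 11) (hf 11 3 (by decide)) (hf 11 4 (by decide)) (hf 11 8 (by decide))
    (f 12) (hf 12 6 (by decide)) (hf 12 7 (by decide)) (hf 12 8 (by decide))

theorem stmt_4 : ksGraph.chromaticNumber = 4 := by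
  rw [ksGraph_eq]
  refine le_antisymm ?_ ?_
  · exact_mod_cast colorable4.chromaticNumber_le
  · by_contra h
    push_neg at h
    have h3 : ksGraphZ.chromaticNumber ≤ (3 : ℕ) := by
      have h4 : ksGraphZ.chromaticNumber < 4 := h
      have : ksGraphZ.chromaticNumber < (3 : ℕ) + 1 := by
        push_cast; exact_mod_cast h4
      exact Order.le_of_lt_add_one this
    exact not_colorable3 (SimpleGraph.chromaticNumber_le_iff_colorable.mp h3)
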